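/- Let E be a directed graph, K a field, and x ∈ ∂E a path that is not rational. Then for all a, b ∈ (K^*)^{E^1} there are graded isomorphisms of ℤ-graded L_K(E)-modules V^a_{[x]} ≅ V^b_{[x]} ≅ V_{[x]} (where each module carries the grading V_{[x],k} = span_K{y ∈ [x] : y ∼_k x}). -/

import Mathlib

open scoped Classical

/-- A directed graph: vertices, edges, source and range maps. -/
structure DirGraph : Type 1 where
  V : Type
  E : Type
  s : E → V
  r : E → V

namespace DirGraph

variable (G : DirGraph)

/-- A finite path: a source vertex together with a compatible list of edges
(the empty list gives the path of length 0 at `src`). -/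
structure FinPath where
  src : G.V
  edges : List G.E
  src_eq : ∀ e ∈ edges.head?, G.s e = src
  chain : edges.Chain' (fun e f => G.r e = G.s f)

variable {G}

/-- The range of a finite path. -/
def FinPath.rng (μ : G.FinPath) : G.V :=
  ((μ.edges.getLast?).map G.r).getD μ.src

/-- The length of a finite path. -/
def FinPath.length (μ : G.FinPath) : ℕ := μ.edges.length

variable (G)

/-- An infinite path. -/
structure InfPath where
  edges : ℕ → G.E
  chain : ∀ n, G.r (edges n) = G.s (edges (n + 1))

/-- The source of an infinite path. -/
def InfPath.src {G : DirGraph} (p : G.InfPath) : G.V := G.s (p.edges 0)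

def IsSink (v : G.V) : Prop := ∀ e, G.s e ≠ v

def IsInfEmitter (v : G.V) : Prop := {e | G.s e = v}.Infinite

def IsSingular (v : G.V) : Prop := IsSink G v ∨ IsInfEmitter G v

/-- Boundary paths: infinite paths, together with finite paths ending in a singular vertex. -/
def BPath : Type := {x : G.FinPath ⊕ G.InfPath // ∀ μ, x = Sum.inl μ → IsSingular G μ.rng}

variable {G}

/-- The source of a boundary path. -/
def BPath.src (x : G.BPath) : G.V :=
  match x.1 with
  | Sum.inl μ => μ.src
  | Sum.inr p => p.src

def BPath.IsInfinite (x : G.BPath) : Prop := ∃ p, x.1 = Sum.inr p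

/-- `IsCat μ p x` means `x = μ p`, i.e. `x` is the concatenation of the finite path `μ`
with the boundary path `p` (in particular `r(μ) = s(p)`). -/
def IsCat (μ : G.FinPath) (p x : G.BPath) : Prop :=
  μ.rng = p.src ∧
  match p.1, x.1 with
  | Sum.inl q, Sum.inl ξ => ξ.src = μ.src ∧ ξ.edges = μ.edges ++ q.edges
  | Sum.inr q, Sum.inr ξ =>
      (∀ (i : ℕ) (h : i < μ.edges.length), ξ.edges i = μ.edges.get ⟨i, h⟩) ∧
      (∀ i : ℕ, ξ.edges (μ.edges.length + i) = q.edges i)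
  | _, _ => False

/-- `x ∼_k y` : tail equivalence with lag `k`. -/
def TailEqLag (x y : G.BPath) (k : ℤ) : Prop :=
  ∃ (μ ν : G.FinPath) (p : G.BPath),
    IsCat μ p x ∧ IsCat ν p y ∧ (μ.length : ℤ) - (ν.length : ℤ) = k

/-- Tail equivalence. -/
def TailEq (x y : G.BPath) : Prop := ∃ k, TailEqLag x y k

/-- The tail-equivalence class (orbit) of a boundary path. -/
def orbit (x : G.BPath) : Set G.BPath := {y | TailEq y x}

/-- A closed path: positive length, same source and range. -/
def FinPath.IsClosed (c : G.FinPath) : Prop := 0 < c.length ∧ c.rng = c.src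

/-- A boundary path is rational if it is tail equivalent to `c^∞` for some closed path `c`;
here `c^∞` is characterized as the unique boundary path `p` with `p = c p`. -/
def IsRational (x : G.BPath) : Prop :=
  ∃ (c : G.FinPath) (p : G.BPath), 0 < c.length ∧ IsCat c p p ∧ TailEq x p

/-- A simple closed path: a closed path which is not a proper power of a closed path. -/
def FinPath.IsSimpleClosed (c : G.FinPath) : Prop :=
  c.IsClosed ∧
    ¬ ∃ (d : G.FinPath) (n : ℕ), 2 ≤ n ∧ d.IsClosed ∧ c.src = d.src ∧
        c.edges = (List.replicate n d.edges).flatten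

/-- A cycle: a closed path passing through no vertex twice. -/
def FinPath.IsCycle (c : G.FinPath) : Prop := c.IsClosed ∧ (c.edges.map G.s).Nodup

/-- An exit for a finite path. -/
def FinPath.HasExit (c : G.FinPath) : Prop :=
  ∃ (i : ℕ) (h : i < c.edges.length) (e : G.E),
    G.s e = G.s (c.edges.get ⟨i, h⟩) ∧ e ≠ c.edges.get ⟨i, h⟩

/-- `c` is a rotation of `d`. -/
def FinPath.IsRotationOf (c d : G.FinPath) : Prop := ∃ i, c.edges = d.edges.rotate i

/-- A maximal cycle: a cycle such that any cycle from which there is a finite path to its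
source is a rotation of it. -/
def FinPath.IsMaxCycle (c : G.FinPath) : Prop :=
  c.IsCycle ∧ ∀ d : G.FinPath, d.IsCycle →
    (∃ μ : G.FinPath, μ.src = d.src ∧ μ.rng = c.src) → d.IsRotationOf c

/-- A maximal sink: a sink with no finite path from the source of any cycle to it. -/
def IsMaxSink (G : DirGraph) (v : G.V) : Prop :=
  IsSink G v ∧ ¬ ∃ (d μ : G.FinPath), d.IsCycle ∧ μ.src = d.src ∧ μ.rng = v

/-- A graph is row-finite if every vertex emits finitely many edges. -/
def RowFinite (G : DirGraph) : Prop := ∀ v : G.V, {e | G.s e = v}.Finite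

/-- The set of predecessors of a vertex. -/
def preds (G : DirGraph) (v : G.V) : Set G.V := {w | ∃ μ : G.FinPath, μ.src = w ∧ μ.rng = v}

/-- The finite path of length 0 at a vertex. -/
def vertexPath (G : DirGraph) (v : G.V) : G.FinPath :=
  ⟨v, [], by intro e he; simp at he, List.IsChain.nil⟩

/-- A singular vertex, seen as a boundary path. -/
def vertexBPath (G : DirGraph) (v : G.V) (h : IsSingular G v) : G.BPath :=
  ⟨Sum.inl (vertexPath G v), by
    intro μ hμ
    injection hμ with h2
    subst h2
    exact h⟩

/-- The finite path consisting of a single edge. -/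
def singleE (G : DirGraph) (e : G.E) : G.FinPath :=
  ⟨G.s e, [e], by
    intro f hf
    simp only [List.head?_cons, Option.mem_def, Option.some.injEq] at hf
    subst hf
    rfl, List.IsChain.singleton e⟩

/-- `a_μ`: the product of the values of `a` along a finite path. -/
def aval {G : DirGraph} {K : Type} [Field K] (a : G.E → K) (μ : G.FinPath) : K :=
  (μ.edges.map a).prod

/-! ## The Leavitt path algebra -/

/-- Generators of the Leavitt path algebra: vertices, edges and ghost edges. -/
inductive Gen (G : DirGraph) : Type
  | vtx : G.V → Gen G
  | edg : G.E → Gen G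
  | ghd : G.E → Gen G

/-- The defining relations of the Leavitt path algebra. -/
inductive LRel (G : DirGraph) (K : Type) [Field K] :
    FreeAlgebra K (Gen G) → FreeAlgebra K (Gen G) → Prop
  | vv_eq (v : G.V) :
      LRel G K (FreeAlgebra.ι K (Gen.vtx v) * FreeAlgebra.ι K (Gen.vtx v))
        (FreeAlgebra.ι K (Gen.vtx v))
  | vv_ne {v w : G.V} (h : v ≠ w) :
      LRel G K (FreeAlgebra.ι K (Gen.vtx v) * FreeAlgebra.ι K (Gen.vtx w)) 0
  | e1l (e : G.E) :
      LRel G K (FreeAlgebra.ι K (Gen.vtx (G.s e)) * FreeAlgebra.ι K (Gen.edg e))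
        (FreeAlgebra.ι K (Gen.edg e))
  | e1r (e : G.E) :
      LRel G K (FreeAlgebra.ι K (Gen.edg e) * FreeAlgebra.ι K (Gen.vtx (G.r e)))
        (FreeAlgebra.ι K (Gen.edg e))
  | e2l (e : G.E) :
      LRel G K (FreeAlgebra.ι K (Gen.vtx (G.r e)) * FreeAlgebra.ι K (Gen.ghd e))
        (FreeAlgebra.ι K (Gen.ghd e))
  | e2r (e : G.E) :
      LRel G K (FreeAlgebra.ι K (Gen.ghd e) * FreeAlgebra.ι K (Gen.vtx (G.s e)))
        (FreeAlgebra.ι K (Gen.ghd e))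
  | ck1_eq (e : G.E) :
      LRel G K (FreeAlgebra.ι K (Gen.ghd e) * FreeAlgebra.ι K (Gen.edg e))
        (FreeAlgebra.ι K (Gen.vtx (G.r e)))
  | ck1_ne {e f : G.E} (h : e ≠ f) :
      LRel G K (FreeAlgebra.ι K (Gen.ghd e) * FreeAlgebra.ι K (Gen.edg f)) 0
  | ck2 (v : G.V) (hfin : {e | G.s e = v}.Finite) (hne : ∃ e, G.s e = v) :
      LRel G K (FreeAlgebra.ι K (Gen.vtx v))
        (∑ e ∈ hfin.toFinset, FreeAlgebra.ι K (Gen.edg e) * FreeAlgebra.ι K (Gen.ghd e))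

/-- The Leavitt path algebra of `G` over `K`. -/
abbrev LPA (G : DirGraph) (K : Type) [Field K] : Type := RingQuot (LRel G K)

/-- The image of a vertex in the Leavitt path algebra. -/
def ofV (G : DirGraph) (K : Type) [Field K] (v : G.V) : LPA G K :=
  RingQuot.mkAlgHom K (LRel G K) (FreeAlgebra.ι K (Gen.vtx v))

/-- The image of an edge in the Leavitt path algebra. -/
def ofE (G : DirGraph) (K : Type) [Field K] (e : G.E) : LPA G K :=
  RingQuot.mkAlgHom K (LRel G K) (FreeAlgebra.ι K (Gen.edg e))

/-- The image of a ghost edge in the Leavitt path algebra. -/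
def ofG (G : DirGraph) (K : Type) [Field K] (e : G.E) : LPA G K :=
  RingQuot.mkAlgHom K (LRel G K) (FreeAlgebra.ι K (Gen.ghd e))

/-- The element `μ` of the Leavitt path algebra associated to a finite path `μ`. -/
def pathElem (G : DirGraph) (K : Type) [Field K] (μ : G.FinPath) : LPA G K :=
  ofV G K μ.src * (μ.edges.map (ofE G K)).prod

/-- The element `μ^*` of the Leavitt path algebra associated to a finite path `μ`. -/
def pathStarElem (G : DirGraph) (K : Type) [Field K] (μ : G.FinPath) : LPA G K :=
  (μ.edges.reverse.map (ofG G K)).prod * ofV G K μ.src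

/-- The degree-`n` homogeneous component of the canonical `ℤ`-grading of the Leavitt
path algebra: the span of the monomials `μ ν^*` with `|μ| - |ν| = n`. -/
def LPAdeg (G : DirGraph) (K : Type) [Field K] (n : ℤ) : Submodule K (LPA G K) :=
  Submodule.span K {x | ∃ μ ν : G.FinPath, μ.rng = ν.rng ∧
    (μ.length : ℤ) - (ν.length : ℤ) = n ∧ x = pathElem G K μ * pathStarElem G K ν}

/-- `W` is a `ℤ`-grading making `M` a graded module over the canonically graded
Leavitt path algebra. -/
def IsModuleGrading (G : DirGraph) (K : Type) [Field K] (M : Type) [AddCommGroup M]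
    [Module K M] [Module (LPA G K) M] (W : ℤ → Submodule K M) : Prop :=
  DirectSum.IsInternal W ∧
    ∀ (m k : ℤ) (a : LPA G K) (y : M), a ∈ LPAdeg G K m → y ∈ W k → a • y ∈ W (m + k)

/-- A set is graded (with respect to a grading `W`) if each of its elements is a finite sum
of homogeneous elements of the set. -/
def GradedCarrier {K M : Type} [Field K] [AddCommGroup M] [Module K M]
    (W : ℤ → Submodule K M) (S : Set M) : Prop :=
  ∀ m ∈ S, ∃ l : List M, (∀ z ∈ l, z ∈ S ∧ ∃ k, z ∈ W k) ∧ l.sum = m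

/-- A graded isomorphism between graded modules over the Leavitt path algebra. -/
def GradedIsoLPA (G : DirGraph) (K : Type) [Field K] (M N : Type)
    [AddCommGroup M] [AddCommGroup N] [Module K M] [Module K N]
    [Module (LPA G K) M] [Module (LPA G K) N]
    (W : ℤ → Submodule K M) (W' : ℤ → Submodule K N) : Prop :=
  ∃ f : M ≃ₗ[LPA G K] N, (∀ k, ∀ m ∈ W k, f m ∈ W' k) ∧ ∀ k, ∀ n ∈ W' k, f.symm n ∈ W k

/-- A module over the Leavitt path algebra is unital if it is generated by the images of the
vertices. -/
def IsUnitalModule (G : DirGraph) (K : Type) [Field K] (M : Type) [AddCommGroup M]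
    [Module (LPA G K) M] : Prop :=
  ∀ m : M, m ∈ Submodule.span (LPA G K) {y : M | ∃ (v : G.V) (m' : M), y = ofV G K v • m'}

/-! ## Chen modules, specified by a basis and the action of the generators -/

/-- A specification of the (twisted) Chen module attached to a boundary path `x`:
an `L_K(E)`-module `M` which is a `K'`-vector space with basis the tail-equivalence class
of `x`, the generators acting by the τ-twisted shift formulas. Here `K ⊆ K'` is a field
extension and `τ : E¹ → K'` is a family of nonzero scalars. -/
structure ChenSpecT (G : DirGraph) (K K' : Type) [Field K] [Field K'] [Algebra K K']
    (τ : G.E → K') (x : G.BPath) (M : Type) [AddCommGroup M] [Module K' M]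
    [Module (LPA G K) M] : Type where
  tau_ne : ∀ e, τ e ≠ 0
  basis : Module.Basis (orbit x) K' M
  act_v : ∀ (v : G.V) (p : orbit x),
    ofV G K v • basis p = if v = BPath.src (p : G.BPath) then basis p else 0
  act_e : ∀ (e : G.E) (p q : orbit x), IsCat (singleE G e) (p : G.BPath) (q : G.BPath) →
    ofE G K e • basis p = τ e • basis q
  act_e_zero : ∀ (e : G.E) (p : orbit x),
    (¬ ∃ q : G.BPath, IsCat (singleE G e) (p : G.BPath) q) → ofE G K e • basis p = 0
  act_g : ∀ (e : G.E) (p q : orbit x), IsCat (singleE G e) (p : G.BPath) (q : G.BPath) →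
    ofG G K e • basis q = (τ e)⁻¹ • basis p
  act_g_zero : ∀ (e : G.E) (q : orbit x),
    (¬ ∃ p : G.BPath, IsCat (singleE G e) p (q : G.BPath)) → ofG G K e • basis q = 0

/-- Specification of the Chen module `V_{[x]}^a` twisted by `a : E¹ → K^*`
(`a = 1` gives `V_{[x]}`). -/
abbrev ChenSpec (G : DirGraph) (K : Type) [Field K] (a : G.E → K) (x : G.BPath) (M : Type)
    [AddCommGroup M] [Module K M] [Module (LPA G K) M] : Type :=
  ChenSpecT G K K a x M

/-- The canonical grading on a Chen module: the degree-`k` component is spanned by the basis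
elements tail-equivalent to `x` with lag `k`. -/
def chenW {G : DirGraph} {K' : Type} [Field K'] {x : G.BPath} {M : Type}
    [AddCommGroup M] [Module K' M] (b : Module.Basis (orbit x) K' M) (k : ℤ) : Submodule K' M :=
  Submodule.span K' (⇑b '' {p : orbit x | TailEqLag (p : G.BPath) x k})

/-! ## The module `K L_x` -/

/-- The set `L_x` of pairs `(y, k)` with `y ∼_k x`. -/
def Lset (G : DirGraph) (x : G.BPath) : Set (G.BPath × ℤ) := {yk | TailEqLag yk.1 x yk.2}

/-- The underlying `K`-vector space of the module `K L_x`, with basis `L_x`. -/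
abbrev KLCarrier (G : DirGraph) (K : Type) [Field K] (x : G.BPath) : Type := (Lset G x) →₀ K

/-- Specification of the `L_K(E)`-module structure on `K L_x`, given by
`(μ ν^*) ⬝ (y, k) = (μ p, |μ| - |ν| + k)` when `y = ν p`, and `0` otherwise. The module
structure is encoded as a `K`-algebra homomorphism `ρ` to the endomorphism algebra. -/
def KLSpec (G : DirGraph) (K : Type) [Field K] (x : G.BPath)
    (ρ : LPA G K →ₐ[K] Module.End K (KLCarrier G K x)) : Prop :=
  (∀ (μ ν : G.FinPath), μ.rng = ν.rng → ∀ (yk zk : Lset G x) (p : G.BPath),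
      IsCat ν p (yk : G.BPath × ℤ).1 → IsCat μ p (zk : G.BPath × ℤ).1 →
      (zk : G.BPath × ℤ).2 = (yk : G.BPath × ℤ).2 + (μ.length : ℤ) - (ν.length : ℤ) →
      ρ (pathElem G K μ * pathStarElem G K ν) (Finsupp.single yk 1) = Finsupp.single zk 1) ∧
  (∀ (μ ν : G.FinPath), μ.rng = ν.rng → ∀ yk : Lset G x,
      (¬ ∃ p : G.BPath, IsCat ν p (yk : G.BPath × ℤ).1) →
      ρ (pathElem G K μ * pathStarElem G K ν) (Finsupp.single yk 1) = 0)

/-- The canonical grading of `K L_x`: `(y, k)` is homogeneous of degree `k`. -/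
noncomputable def KLgr (G : DirGraph) (K : Type) [Field K] (x : G.BPath) (k : ℤ) :
    Submodule K (KLCarrier G K x) :=
  Submodule.span K {m | ∃ yk : Lset G x, (yk : G.BPath × ℤ).2 = k ∧ m = Finsupp.single yk 1}

end DirGraph

open DirGraph


namespace DirGraph

variable {G : DirGraph}

theorem FinPath.ext' {μ ν : G.FinPath} (h1 : μ.src = ν.src) (h2 : μ.edges = ν.edges) :
    μ = ν := by
  cases μ; cases ν; simp_all

theorem BPath.ext' {p q : G.BPath} (h : p.1 = q.1) : p = q := Subtype.ext h

theorem FinPath.rng_nil {μ : G.FinPath} (h : μ.edges = []) : μ.rng = μ.src := by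
  simp [FinPath.rng, h]

theorem FinPath.rng_last {μ : G.FinPath} {e : G.E} (h : e ∈ μ.edges.getLast?) :
    μ.rng = G.r e := by
  simp only [Option.mem_def] at h
  simp [FinPath.rng, h]

/-- Concatenation of finite paths. -/
def FinPath.comp (β α : G.FinPath) (h : β.rng = α.src) : G.FinPath where
  src := β.src
  edges := β.edges ++ α.edges
  src_eq := by
    intro e he
    rcases hβ : β.edges with _ | ⟨b, l⟩
    · rw [hβ] at he
      simp only [List.nil_append] at he
      rw [α.src_eq e he, ← h, FinPath.rng_nil hβ]
    · rw [hβ] at he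
      simp only [List.cons_append, List.head?_cons, Option.mem_def, Option.some.injEq] at he
      exact he ▸ β.src_eq b (by rw [hβ]; rfl)
  chain := by
    apply List.IsChain.append β.chain α.chain
    intro e he f hf
    rw [α.src_eq f hf, ← h, FinPath.rng_last he]

@[simp] theorem FinPath.comp_src (β α : G.FinPath) (h) : (β.comp α h).src = β.src := rfl
@[simp] theorem FinPath.comp_edges (β α : G.FinPath) (h) :
    (β.comp α h).edges = β.edges ++ α.edges := rfl

theorem FinPath.comp_rng (β α : G.FinPath) (h) : (β.comp α h).rng = α.rng := by
  rcases hα : α.edges.getLast? with _ | c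
  · have h0 : α.edges = [] := by simpa using hα
    rw [FinPath.rng_nil h0, ← h]
    show ((((β.edges ++ α.edges).getLast?).map G.r).getD β.src) = β.rng
    rw [h0, List.append_nil]
    rfl
  · rw [FinPath.rng_last (μ := α) hα, FinPath.rng_last (μ := β.comp α h)]
    simp [hα]

@[simp] theorem FinPath.comp_length (β α : G.FinPath) (h) :
    (β.comp α h).length = β.length + α.length := by
  simp [FinPath.length, comp]

@[simp] theorem vertexPath_rng (v : G.V) : (vertexPath G v).rng = v := rfl
@[simp] theorem vertexPath_length (v : G.V) : (vertexPath G v).length = 0 := rfl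
@[simp] theorem vertexPath_edges (v : G.V) : (vertexPath G v).edges = [] := rfl

theorem cat_nil (p : G.BPath) : IsCat (vertexPath G p.src) p p := by
  constructor
  · rfl
  · rcases p with ⟨p | p, hp⟩
    · exact ⟨rfl, rfl⟩
    · refine ⟨by intro i h; simp [vertexPath] at h, by intro i; simp [vertexPath]⟩

end DirGraph

namespace DirGraph

variable {G : DirGraph}

theorem InfPath.ext' {p q : G.InfPath} (h : p.edges = q.edges) : p = q := by
  cases p; cases q; simp_all

@[simp] theorem BPath.src_inl (μ : G.FinPath) (h) :
    BPath.src (⟨Sum.inl μ, h⟩ : G.BPath) = μ.src := rfl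

@[simp] theorem BPath.src_inr (p : G.InfPath) (h) :
    BPath.src (⟨Sum.inr p, h⟩ : G.BPath) = G.s (p.edges 0) := rfl

@[simp] theorem FinPath.length_def (μ : G.FinPath) : μ.length = μ.edges.length := rfl

theorem cat_src {α : G.FinPath} {p y : G.BPath} (h : IsCat α p y) : y.src = α.src := by
  obtain ⟨h1, h2⟩ := h
  rcases y with ⟨ξ | ζ, hy⟩
  · rcases p with ⟨ρ | ρ, hp⟩
    · exact h2.1
    · exact absurd h2 not_false
  · rcases p with ⟨ρ | ρ, hp⟩
    · exact absurd h2 not_false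
    · obtain ⟨h2, h3⟩ := h2
      rcases hα : α.edges with _ | ⟨b, l⟩
      · have e0 : ζ.edges 0 = ρ.edges 0 := by
          have := h3 0
          rwa [hα] at this
        rw [BPath.src_inr, e0, ← FinPath.rng_nil hα, h1]
        rfl
      · have hlt : 0 < α.edges.length := by rw [hα]; simp
        rw [BPath.src_inr, h2 0 hlt]
        have hb : α.edges.get ⟨0, hlt⟩ = b := by simp [hα]
        rw [hb]
        exact α.src_eq b (by rw [hα]; rfl)

theorem cat_right_unique {μ : G.FinPath} {p q q' : G.BPath} (h : IsCat μ p q)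
    (h' : IsCat μ p q') : q = q' := by
  obtain ⟨h1, h2⟩ := h
  obtain ⟨h1', h2'⟩ := h'
  rcases p with ⟨ρ | ρ, hp⟩
  · rcases q with ⟨ξ | ξ, hq⟩
    · rcases q' with ⟨ξ' | ξ', hq'⟩
      · obtain ⟨ha, hb⟩ := h2
        obtain ⟨ha', hb'⟩ := h2'
        exact BPath.ext' (congrArg Sum.inl (FinPath.ext' (ha.trans ha'.symm)
          (hb.trans hb'.symm)))
      · exact absurd h2' not_false
    · exact absurd h2 not_false
  · rcases q with ⟨ξ | ξ, hq⟩
    · exact absurd h2 not_false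
    · rcases q' with ⟨ξ' | ξ', hq'⟩
      · exact absurd h2' not_false
      · obtain ⟨ha, hb⟩ := h2
        obtain ⟨ha', hb'⟩ := h2'
        refine BPath.ext' (congrArg Sum.inr (InfPath.ext' (funext fun i => ?_)))
        rcases lt_or_ge i μ.edges.length with hi | hi
        · rw [ha i hi, ha' i hi]
        · obtain ⟨j, rfl⟩ := Nat.exists_eq_add_of_le hi
          rw [hb j, hb' j]

theorem cat_left_cancel {μ : G.FinPath} {p p' q : G.BPath} (h : IsCat μ p q)
    (h' : IsCat μ p' q) : p = p' := by
  obtain ⟨h1, h2⟩ := h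
  obtain ⟨h1', h2'⟩ := h'
  rcases q with ⟨ξ | ξ, hq⟩
  · rcases p with ⟨ρ | ρ, hp⟩
    · rcases p' with ⟨ρ' | ρ', hp'⟩
      · obtain ⟨ha, hb⟩ := h2
        obtain ⟨ha', hb'⟩ := h2'
        refine BPath.ext' (congrArg Sum.inl (FinPath.ext' ?_ ?_))
        · exact (h1.symm.trans h1' : _)
        · exact List.append_cancel_left (hb.symm.trans hb')
      · exact absurd h2' not_false
    · exact absurd h2 not_false
  · rcases p with ⟨ρ | ρ, hp⟩
    · exact absurd h2 not_false
    · rcases p' with ⟨ρ' | ρ', hp'⟩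
      · exact absurd h2' not_false
      · obtain ⟨ha, hb⟩ := h2
        obtain ⟨ha', hb'⟩ := h2'
        refine BPath.ext' (congrArg Sum.inr (InfPath.ext' (funext fun i => ?_)))
        rw [← hb i, ← hb' i]

theorem cat_comp {α β : G.FinPath} {p y z : G.BPath} (h1 : IsCat α p y) (h2 : IsCat β y z) :
    IsCat (β.comp α (h2.1.trans (cat_src h1))) p z := by
  constructor
  · rw [FinPath.comp_rng]; exact h1.1
  · rcases z with ⟨ξ | ζ, hz⟩
    · rcases y with ⟨yξ | yζ, hy⟩
      · rcases p with ⟨ρ | ρ, hp⟩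
        · obtain ⟨hc, hd⟩ := h1.2
          obtain ⟨he, hf⟩ := h2.2
          refine ⟨he, ?_⟩
          show ξ.edges = (β.edges ++ α.edges) ++ ρ.edges
          rw [hf, hd, List.append_assoc]
        · exact absurd h1.2 not_false
      · exact absurd h2.2 not_false
    · rcases y with ⟨yξ | yζ, hy⟩
      · exact absurd h2.2 not_false
      · rcases p with ⟨ρ | ρ, hp⟩
        · exact absurd h1.2 not_false
        · obtain ⟨hc, hd⟩ := h1.2
          obtain ⟨he, hf⟩ := h2.2
          constructor
          · intro i hi
            have hi' : i < (β.edges ++ α.edges).length := hi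
            show ζ.edges i = (β.edges ++ α.edges)[i]'hi'
            rcases lt_or_ge i β.edges.length with hib | hib
            · rw [List.getElem_append_left hib]
              have := he i hib
              simpa using this
            · rw [List.getElem_append_right hib]
              obtain ⟨j, rfl⟩ := Nat.exists_eq_add_of_le hib
              have hj : j < α.edges.length := by
                simp only [List.length_append] at hi'; omega
              rw [hf j]
              have := hc j hj
              simp only [List.get_eq_getElem] at this
              rw [this]
              congr 1
              omega
          · intro i
            show ζ.edges ((β.edges ++ α.edges).length + i) = ρ.edges i
            rw [List.length_append, Nat.add_assoc, hf (α.edges.length + i), hd i]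

theorem cat_prefix {μ μ' : G.FinPath} {q q' p : G.BPath} (hμ : IsCat μ q p)
    (hμ' : IsCat μ' q' p) (hle : μ.length ≤ μ'.length) : μ.edges <+: μ'.edges := by
  simp only [FinPath.length_def] at hle
  obtain ⟨h1, h2⟩ := hμ
  obtain ⟨h1', h2'⟩ := hμ'
  rcases p with ⟨ξ | ζ, hp⟩
  · rcases q with ⟨ρ | ρ, hq⟩
    · rcases q' with ⟨ρ' | ρ', hq'⟩
      · obtain ⟨ha, hb⟩ := h2
        obtain ⟨ha', hb'⟩ := h2'
        exact List.prefix_of_prefix_length_le ⟨ρ.edges, hb.symm⟩ ⟨ρ'.edges, hb'.symm⟩ hle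
      · exact absurd h2' not_false
    · exact absurd h2 not_false
  · rcases q with ⟨ρ | ρ, hq⟩
    · exact absurd h2 not_false
    · rcases q' with ⟨ρ' | ρ', hq'⟩
      · exact absurd h2' not_false
      · obtain ⟨ha, hb⟩ := h2
        obtain ⟨ha', hb'⟩ := h2'
        have htake : μ'.edges.take μ.edges.length = μ.edges := by
          apply List.ext_get
          · simp only [List.length_take]
            omega
          · intro i hi1 hi2
            simp only [List.get_eq_getElem, List.getElem_take]
            have hi' : i < μ'.edges.length := by
              simp only [List.length_take] at hi1; omega
            have := (ha' i hi').symm.trans (ha i hi2)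
            simpa using this
        exact htake ▸ List.take_prefix _ _

theorem cat_decomp {μ μ' : G.FinPath} {q q' p : G.BPath} (hμ : IsCat μ q p)
    (hμ' : IsCat μ' q' p) (hle : μ.length ≤ μ'.length) :
    ∃ (σ : G.FinPath) (h : μ.rng = σ.src), μ' = μ.comp σ h ∧ IsCat σ q' q := by
  obtain ⟨t, ht⟩ := cat_prefix hμ hμ' hle
  have hchain : t.Chain' (fun e f => G.r e = G.s f) := by
    have := μ'.chain
    rw [← ht] at this
    exact (List.isChain_append.mp this).2.1
  have hsrc : ∀ f ∈ t.head?, G.s f = μ.rng := by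
    intro f hf
    rcases hμe : μ.edges.getLast? with _ | e
    · have h0 : μ.edges = [] := by simpa using hμe
      have hT : t = μ'.edges := by rw [← ht, h0, List.nil_append]
      rw [μ'.src_eq f (hT ▸ hf), (cat_src hμ').symm.trans (cat_src hμ), ← FinPath.rng_nil h0]
    · have hlink : ∀ e' ∈ μ.edges.getLast?, ∀ f' ∈ t.head?, G.r e' = G.s f' := by
        have := μ'.chain
        rw [← ht] at this
        exact (List.isChain_append.mp this).2.2
      rw [← hlink e (by rw [hμe]; rfl) f hf, ← FinPath.rng_last (by rw [hμe]; rfl : e ∈ μ.edges.getLast?)]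
  have hlen : μ'.edges.length = μ.edges.length + t.length := by
    rw [← ht, List.length_append]
  have hss : μ'.src = μ.src := (cat_src hμ').symm.trans (cat_src hμ)
  refine ⟨⟨μ.rng, t, hsrc, hchain⟩, rfl, ?_, ?_⟩
  · exact FinPath.ext' hss ht.symm
  · have hcomp : μ' = μ.comp ⟨μ.rng, t, hsrc, hchain⟩ rfl :=
      FinPath.ext' hss ht.symm
    constructor
    · have h3 := FinPath.comp_rng μ ⟨μ.rng, t, hsrc, hchain⟩ rfl
      rw [← hcomp] at h3
      rw [← h3]
      exact hμ'.1
    · rcases p with ⟨ξ | ζ, hp⟩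
      · rcases q with ⟨ρ | ρ, hq⟩
        · rcases q' with ⟨ρ' | ρ', hq'⟩
          · obtain ⟨ha, hb⟩ := hμ.2
            obtain ⟨ha', hb'⟩ := hμ'.2
            refine ⟨hμ.1.symm, ?_⟩
            show ρ.edges = t ++ ρ'.edges
            apply List.append_cancel_left (as := μ.edges)
            rw [← hb, hb', ← ht, List.append_assoc]
          · exact absurd hμ'.2 not_false
        · exact absurd hμ.2 not_false
      · rcases q with ⟨η | η, hq⟩
        · exact absurd hμ.2 not_false
        · rcases q' with ⟨η' | η', hq'⟩
          · exact absurd hμ'.2 not_false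
          · obtain ⟨ha, hb⟩ := hμ.2
            obtain ⟨ha', hb'⟩ := hμ'.2
            constructor
            · intro i hi
              have hi' : i < t.length := hi
              show η.edges i = t[i]'hi'
              have hlt : μ.edges.length + i < μ'.edges.length := by omega
              have e1 := hb i
              have e2 := ha' (μ.edges.length + i) hlt
              rw [e2] at e1
              rw [← e1]
              simp only [List.get_eq_getElem]
              rw [List.getElem_of_eq ht.symm, List.getElem_append_right (Nat.le_add_right _ _)]
              simp
            · intro i
              show η.edges (t.length + i) = η'.edges i
              have e1 := hb (t.length + i)
              have h4 : μ.edges.length + (t.length + i) = μ'.edges.length + i := by omega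
              rw [h4] at e1
              rw [← e1, hb' i]

end DirGraph

namespace DirGraph

variable {G : DirGraph}

theorem tailEq_of_cat {y w p : G.BPath} {μ ν : G.FinPath} (h1 : IsCat μ p y)
    (h2 : IsCat ν p w) : TailEq y w :=
  ⟨(μ.length : ℤ) - (ν.length : ℤ), μ, ν, p, h1, h2, rfl⟩

theorem tailEq_trans {y z w : G.BPath} (h1 : TailEq y z) (h2 : TailEq z w) : TailEq y w := by
  obtain ⟨k1, μ, ν, p, hμ, hν, hk⟩ := h1
  obtain ⟨k2, μ', ν', p', hμ', hν', hk'⟩ := h2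
  rcases le_total ν.length μ'.length with hle | hle
  · obtain ⟨σ, hσ, hcomp, hcat⟩ := cat_decomp hν hμ' hle
    exact tailEq_of_cat (cat_comp hcat hμ) hν'
  · obtain ⟨σ, hσ, hcomp, hcat⟩ := cat_decomp hμ' hν hle
    exact tailEq_of_cat hμ (cat_comp hcat hν')

theorem mem_orbit_iff {x y : G.BPath} : y ∈ orbit x ↔ TailEq y x := Iff.rfl

theorem orbit_cat {x p q : G.BPath} {μ : G.FinPath} (hp : p ∈ orbit x) (h : IsCat μ p q) :
    q ∈ orbit x :=
  tailEq_trans (tailEq_of_cat h (cat_nil p)) hp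

theorem orbit_cat_rev {x p q : G.BPath} {μ : G.FinPath} (hq : q ∈ orbit x)
    (h : IsCat μ p q) : p ∈ orbit x :=
  tailEq_trans (tailEq_of_cat (cat_nil p) h) hq

theorem cat_rigid_le {x : G.BPath} (hx : ¬ IsRational x) {γ ν : G.FinPath} {q : G.BPath}
    (hγ : IsCat γ q x) (hν : IsCat ν q x) (hle : γ.length ≤ ν.length) : γ = ν := by
  obtain ⟨σ, hσ, hcomp, hcat⟩ := cat_decomp hγ hν hle
  by_cases h0 : σ.edges = []
  · exact (hcomp.trans (FinPath.ext' (μ := γ.comp σ hσ) (ν := γ) rfl (by simp [h0]))).symm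
  · exact absurd
      ⟨σ, q, by simpa [FinPath.length_def] using List.length_pos_iff.mpr h0, hcat,
        ⟨(γ.length : ℤ), γ, vertexPath G q.src, q, hγ, cat_nil q, by simp⟩⟩ hx

theorem cat_rigid {x : G.BPath} (hx : ¬ IsRational x) {γ ν : G.FinPath} {q : G.BPath}
    (hγ : IsCat γ q x) (hν : IsCat ν q x) : γ = ν := by
  rcases le_total γ.length ν.length with hle | hle
  · exact cat_rigid_le hx hγ hν hle
  · exact (cat_rigid_le hx hν hγ hle).symm

variable {K : Type} [Field K]

theorem aval_ne {a : G.E → K} (ha : ∀ e, a e ≠ 0) (μ : G.FinPath) : aval a μ ≠ 0 := by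
  apply List.prod_ne_zero
  intro h
  rw [List.mem_map] at h
  obtain ⟨e, he, h0⟩ := h
  exact ha e h0

theorem aval_comp (a : G.E → K) (β α : G.FinPath) (h) :
    aval a (β.comp α h) = aval a β * aval a α := by
  simp [aval]

theorem ratio_eq_le {x : G.BPath} (hx : ¬ IsRational x) (a b : G.E → K)
    {μ ν μ' ν' : G.FinPath} {q q' p : G.BPath}
    (h1 : IsCat μ q p) (h2 : IsCat ν q x) (h3 : IsCat μ' q' p) (h4 : IsCat ν' q' x)
    (hle : μ.length ≤ μ'.length) :
    aval b μ * aval a ν * (aval a μ' * aval b ν')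
      = aval b μ' * aval a ν' * (aval a μ * aval b ν) := by
  obtain ⟨σ, hσ, hcomp, hcat⟩ := cat_decomp h1 h3 hle
  have hrig : ν' = ν.comp σ (h2.1.trans (cat_src hcat)) := cat_rigid hx h4 (cat_comp hcat h2)
  rw [hcomp, hrig, aval_comp, aval_comp, aval_comp, aval_comp]
  ring

theorem ratio_eq {x : G.BPath} (hx : ¬ IsRational x) (a b : G.E → K)
    {μ ν μ' ν' : G.FinPath} {q q' p : G.BPath}
    (h1 : IsCat μ q p) (h2 : IsCat ν q x) (h3 : IsCat μ' q' p) (h4 : IsCat ν' q' x) :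
    aval b μ * aval a ν * (aval a μ' * aval b ν')
      = aval b μ' * aval a ν' * (aval a μ * aval b ν) := by
  rcases le_total μ.length μ'.length with hle | hle
  · exact ratio_eq_le hx a b h1 h2 h3 h4 hle
  · exact (ratio_eq_le hx a b h3 h4 h1 h2 hle).symm

end DirGraph

namespace DirGraph

variable {G : DirGraph}

@[simp] theorem aval_single {K : Type} [Field K] (a : G.E → K) (e : G.E) :
    aval a (singleE G e) = a e := by
  simp [aval, singleE]

theorem lpa_adjoin (G : DirGraph) (K : Type) [Field K] :
    Algebra.adjoin K (Set.range fun g : Gen G =>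
      RingQuot.mkAlgHom K (LRel G K) (FreeAlgebra.ι K g)) = ⊤ := by
  have h1 : (Set.range fun g : Gen G => RingQuot.mkAlgHom K (LRel G K) (FreeAlgebra.ι K g))
      = (RingQuot.mkAlgHom K (LRel G K)) '' Set.range (FreeAlgebra.ι K) := by
    rw [← Set.range_comp]; rfl
  rw [h1, ← AlgHom.map_adjoin, FreeAlgebra.adjoin_range_ι, Algebra.map_top]
  exact (AlgHom.range_eq_top _).mpr (RingQuot.mkAlgHom_surjective K (LRel G K))

theorem chen_iso (G : DirGraph) (K : Type) [Field K] (x : G.BPath) (hx : ¬ IsRational x)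
    (a b : G.E → K)
    (M : Type) [AddCommGroup M] [Module K M] [Module (LPA G K) M]
    [IsScalarTower K (LPA G K) M]
    (N : Type) [AddCommGroup N] [Module K N] [Module (LPA G K) N]
    [IsScalarTower K (LPA G K) N]
    (spM : ChenSpec G K a x M) (spN : ChenSpec G K b x N) :
    GradedIsoLPA G K M N (fun k => chenW spM.basis k) (fun k => chenW spN.basis k) := by
  classical
  have ha : ∀ e, a e ≠ 0 := spM.tau_ne
  have hb : ∀ e, b e ≠ 0 := spN.tau_ne
  have hwit : ∀ p : orbit x, ∃ (μ ν : G.FinPath) (q : G.BPath),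
      IsCat μ q (p : G.BPath) ∧ IsCat ν q x := by
    rintro ⟨p, hp⟩
    obtain ⟨k, μ, ν, q, h1, h2, _⟩ := hp
    exact ⟨μ, ν, q, h1, h2⟩
  choose μw νw qw hw1 hw2 using hwit
  set c : orbit x → K := fun p =>
    (aval b (μw p) * aval a (νw p)) / (aval a (μw p) * aval b (νw p)) with hcdef
  have hc0 : ∀ p, c p ≠ 0 := fun p =>
    div_ne_zero (mul_ne_zero (aval_ne hb _) (aval_ne ha _))
      (mul_ne_zero (aval_ne ha _) (aval_ne hb _))
  have c_spec : ∀ (p : orbit x) (μ ν : G.FinPath) (q : G.BPath),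
      IsCat μ q (p : G.BPath) → IsCat ν q x →
      c p = (aval b μ * aval a ν) / (aval a μ * aval b ν) := by
    intro p μ ν q h1 h2
    rw [hcdef]
    rw [div_eq_div_iff (mul_ne_zero (aval_ne ha _) (aval_ne hb _))
      (mul_ne_zero (aval_ne ha _) (aval_ne hb _))]
    exact ratio_eq hx a b (hw1 p) (hw2 p) h1 h2
  have c_edge : ∀ (e : G.E) (p q : orbit x),
      IsCat (singleE G e) (p : G.BPath) (q : G.BPath) → a e * c q = b e * c p := by
    intro e p q hcat
    have h1 : IsCat ((singleE G e).comp (μw p) (hcat.1.trans (cat_src (hw1 p)))) (qw p) ↑q :=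
      cat_comp (hw1 p) hcat
    have h2 := c_spec q _ _ _ h1 (hw2 p)
    have h3 := c_spec p _ _ _ (hw1 p) (hw2 p)
    rw [aval_comp, aval_comp, aval_single, aval_single] at h2
    rw [h2, h3]
    have h4 := aval_ne ha (μw p)
    have h5 := aval_ne hb (μw p)
    have h6 := aval_ne ha (νw p)
    have h7 := aval_ne hb (νw p)
    have h8 := ha e
    have h9 := hb e
    field_simp
  -- the linear maps
  let f : M →ₗ[K] N := spM.basis.constr K fun p => c p • spN.basis p
  let fi : N →ₗ[K] M := spN.basis.constr K fun p => (c p)⁻¹ • spM.basis p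
  have hfB : ∀ p, f (spM.basis p) = c p • spN.basis p := fun p =>
    Module.Basis.constr_basis spM.basis K _ p
  have hfiB : ∀ p, fi (spN.basis p) = (c p)⁻¹ • spM.basis p := fun p =>
    Module.Basis.constr_basis spN.basis K _ p
  have hleft : fi.comp f = LinearMap.id := by
    apply spM.basis.ext
    intro p
    simp only [LinearMap.comp_apply, LinearMap.id_apply, hfB, map_smul, hfiB, smul_smul]
    rw [mul_inv_cancel₀ (hc0 p), one_smul]
  have hright : f.comp fi = LinearMap.id := by
    apply spN.basis.ext
    intro p
    simp only [LinearMap.comp_apply, LinearMap.id_apply, hfiB, map_smul, hfB, smul_smul]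
    rw [inv_mul_cancel₀ (hc0 p), one_smul]
  have hact : ∀ η : LPA G K, (∀ p : orbit x, f (η • spM.basis p) = η • f (spM.basis p)) →
      ∀ m : M, f (η • m) = η • f m := by
    intro η hp m
    let actM : M →ₗ[K] M :=
      { toFun := fun m => η • m
        map_add' := fun m m' => smul_add η m m'
        map_smul' := fun k m => (smul_comm k η m).symm }
    let actN : N →ₗ[K] N :=
      { toFun := fun n => η • n
        map_add' := fun n n' => smul_add η n n'
        map_smul' := fun k n => (smul_comm k η n).symm }
    have h : f.comp actM = actN.comp f := spM.basis.ext fun p => hp p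
    exact LinearMap.congr_fun h m
  have hV : ∀ (v : G.V) (m : M), f (ofV G K v • m) = ofV G K v • f m := by
    intro v
    apply hact
    intro p
    have hL : f (ofV G K v • spM.basis p)
        = if v = BPath.src (p : G.BPath) then c p • spN.basis p else 0 := by
      rw [spM.act_v v p]
      split_ifs
      · exact hfB p
      · exact f.map_zero
    have hR : ofV G K v • f (spM.basis p)
        = if v = BPath.src (p : G.BPath) then c p • spN.basis p else 0 := by
      rw [hfB, smul_comm (ofV G K v) (c p) (spN.basis p), spN.act_v v p]
      split_ifs
      · rfl
      · rw [smul_zero]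
    rw [hL, hR]
  have hE : ∀ (e : G.E) (m : M), f (ofE G K e • m) = ofE G K e • f m := by
    intro e
    apply hact
    intro p
    by_cases h : ∃ q : G.BPath, IsCat (singleE G e) (p : G.BPath) q
    · obtain ⟨q, hq⟩ := h
      have hqo : q ∈ orbit x := orbit_cat p.2 hq
      have hqq : IsCat (singleE G e) (p : G.BPath) ((⟨q, hqo⟩ : orbit x) : G.BPath) := hq
      have hL : f (ofE G K e • spM.basis p)
          = (a e * c ⟨q, hqo⟩) • spN.basis ⟨q, hqo⟩ := by
        rw [spM.act_e e p ⟨q, hqo⟩ hqq, map_smul, hfB, smul_smul]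
      have hR : ofE G K e • f (spM.basis p) = (c p * b e) • spN.basis ⟨q, hqo⟩ := by
        rw [hfB, smul_comm (ofE G K e) (c p) (spN.basis p), spN.act_e e p ⟨q, hqo⟩ hqq,
          smul_smul]
      rw [hL, hR, c_edge e p ⟨q, hqo⟩ hqq, mul_comm (b e) (c p)]
    · rw [spM.act_e_zero e p h, map_zero, hfB,
        smul_comm (ofE G K e) (c p) (spN.basis p), spN.act_e_zero e p h, smul_zero]
  have hG : ∀ (e : G.E) (m : M), f (ofG G K e • m) = ofG G K e • f m := by
    intro e
    apply hact
    intro p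
    by_cases h : ∃ p' : G.BPath, IsCat (singleE G e) p' (p : G.BPath)
    · obtain ⟨p', hq⟩ := h
      have hpo : p' ∈ orbit x := orbit_cat_rev p.2 hq
      have hqq : IsCat (singleE G e) ((⟨p', hpo⟩ : orbit x) : G.BPath) (p : G.BPath) := hq
      have hL : f (ofG G K e • spM.basis p)
          = ((a e)⁻¹ * c ⟨p', hpo⟩) • spN.basis ⟨p', hpo⟩ := by
        rw [spM.act_g e ⟨p', hpo⟩ p hqq, map_smul, hfB, smul_smul]
      have hR : ofG G K e • f (spM.basis p) = (c p * (b e)⁻¹) • spN.basis ⟨p', hpo⟩ := by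
        rw [hfB, smul_comm (ofG G K e) (c p) (spN.basis p), spN.act_g e ⟨p', hpo⟩ p hqq,
          smul_smul]
      rw [hL, hR]
      congr 1
      have h5 := c_edge e ⟨p', hpo⟩ p hqq
      have h8 := ha e
      have h9 := hb e
      obtain ⟨u, hu⟩ : ∃ u, c p = u := ⟨_, rfl⟩
      obtain ⟨w, hw⟩ : ∃ w, c ⟨p', hpo⟩ = w := ⟨_, rfl⟩
      rw [hu, hw] at h5 ⊢
      field_simp
      linear_combination -h5
    · rw [spM.act_g_zero e p h, map_zero, hfB,
        smul_comm (ofG G K e) (c p) (spN.basis p), spN.act_g_zero e p h, smul_zero]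
  have hful : ∀ (η : LPA G K) (m : M), f (η • m) = η • f m := by
    intro η
    have hη : η ∈ Algebra.adjoin K (Set.range fun g : Gen G =>
        RingQuot.mkAlgHom K (LRel G K) (FreeAlgebra.ι K g)) := by
      rw [lpa_adjoin]
      exact Algebra.mem_top
    refine Algebra.adjoin_induction (p := fun η _ => ∀ m : M, f (η • m) = η • f m)
      ?_ ?_ ?_ ?_ hη
    · rintro _ ⟨g, rfl⟩ m
      rcases g with v | e | e
      · exact hV v m
      · exact hE e m
      · exact hG e m
    · intro r m
      rw [algebraMap_smul, algebraMap_smul, map_smul]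
    · intro η θ _ _ h1 h2 m
      rw [add_smul, add_smul, map_add, h1 m, h2 m]
    · intro η θ _ _ h1 h2 m
      rw [mul_smul, mul_smul, h1 (θ • m), h2 m]
  let F : M →ₗ[LPA G K] N :=
    { toFun := f
      map_add' := f.map_add
      map_smul' := fun η m => hful η m }
  let E : M ≃ₗ[LPA G K] N :=
    { F with
      invFun := fi
      left_inv := fun m => LinearMap.congr_fun hleft m
      right_inv := fun n => LinearMap.congr_fun hright n }
  refine ⟨E, ?_, ?_⟩
  · intro k m hm
    induction hm using Submodule.span_induction with
    | mem z hz =>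
      obtain ⟨p, hp, rfl⟩ := hz
      show f (spM.basis p) ∈ _
      rw [hfB]
      exact Submodule.smul_mem _ _ (Submodule.subset_span ⟨p, hp, rfl⟩)
    | zero =>
      rw [map_zero]
      exact Submodule.zero_mem _
    | add y z hy hz hy' hz' =>
      rw [map_add]
      exact Submodule.add_mem _ hy' hz'
    | smul k' z hz hz' =>
      show f (k' • z) ∈ _
      rw [map_smul]
      exact Submodule.smul_mem _ _ hz'
  · intro k n hn
    induction hn using Submodule.span_induction with
    | mem z hz =>
      obtain ⟨p, hp, rfl⟩ := hz
      show fi (spN.basis p) ∈ _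
      rw [hfiB]
      exact Submodule.smul_mem _ _ (Submodule.subset_span ⟨p, hp, rfl⟩)
    | zero =>
      show fi 0 ∈ _
      rw [map_zero]
      exact Submodule.zero_mem _
    | add y z hy hz hy' hz' =>
      show fi (y + z) ∈ _
      rw [map_add]
      exact Submodule.add_mem _ hy' hz'
    | smul k' z hz hz' =>
      show fi (k' • z) ∈ _
      rw [map_smul]
      exact Submodule.smul_mem _ _ hz'

end DirGraph

/-- for `x ∈ ∂E` not rational and `a, b ∈ (K^*)^{E¹}`, there are graded
isomorphisms `V_{[x]}^a ≅ V_{[x]}^b ≅ V_{[x]}` of `ℤ`-graded `L_K(E)`-modules. -/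
theorem stmt_3 (G : DirGraph) (K : Type) [Field K]
    (x : G.BPath) (hx : ¬ IsRational x) (a b : G.E → K)
    (M : Type) [AddCommGroup M] [Module K M] [Module (LPA G K) M]
    [IsScalarTower K (LPA G K) M]
    (N : Type) [AddCommGroup N] [Module K N] [Module (LPA G K) N]
    [IsScalarTower K (LPA G K) N]
    (P : Type) [AddCommGroup P] [Module K P] [Module (LPA G K) P]
    [IsScalarTower K (LPA G K) P]
    (spM : ChenSpec G K a x M) (spN : ChenSpec G K b x N)
    (spP : ChenSpec G K (fun _ => 1) x P) :
    GradedIsoLPA G K M N (fun k => chenW spM.basis k) (fun k => chenW spN.basis k) ∧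
      GradedIsoLPA G K N P (fun k => chenW spN.basis k) (fun k => chenW spP.basis k) :=
  ⟨chen_iso G K x hx a b M N spM spN, chen_iso G K x hx b (fun _ => 1) N P spN spP⟩
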